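/- Let Π be the lattice of partitions of [0,1] into finitely many sets each a finite union of intervals, ordered by refinement, and for P ∈ Π let L_P be the linear span of the indicator functions of products I×J with I,J ∈ P (inside L²([0,1]²)), with x_P the orthogonal projection of x onto L_P. For every ε > 0 and every rectangle x = 1_{A×B} (A, B finite unions of intervals), and every N ∈ Π, there exists P ∈ Π with P coarser than or equal to N, |P| ≤ (1+2/ε)², and ‖x_N − x_P‖ < ε. -/

import Mathlib

open MeasureTheory Set Classical
open scoped RealInnerProductSpace

/-- The indicator function of a set `S ⊆ ℝ²` as an element of `L²(ℝ²)`
(defined to be `0` if `S` is not measurable of finite measure). -/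
noncomputable def ind (S : Set (ℝ × ℝ)) : Lp ℝ 2 (volume : Measure (ℝ × ℝ)) :=
  if h : MeasurableSet S ∧ volume S ≠ ⊤ then indicatorConstLp 2 h.1 h.2 (1 : ℝ) else 0

/-- A finite union of intervals of `ℝ`. -/
def FinUnionIntervals (S : Set ℝ) : Prop :=
  ∃ F : Finset (Set ℝ), (∀ I ∈ F, I.OrdConnected) ∧ S = ⋃ I ∈ F, I

/-- A partition of `[0,1]` into finitely many classes, each a finite union of intervals. -/
def IsIntervalPartition (P : Finset (Set ℝ)) : Prop :=
  (∀ S ∈ P, FinUnionIntervals S) ∧ (↑P : Set (Set ℝ)).PairwiseDisjoint id ∧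
    (⋃ S ∈ P, S) = Icc (0 : ℝ) 1

/-- The subspace `L_P` of `L²([0,1]²)`, spanned by indicators of products of classes. -/
noncomputable def LP (P : Finset (Set ℝ)) :
    Submodule ℝ (Lp ℝ 2 (volume : Measure (ℝ × ℝ))) :=
  Submodule.span ℝ {f | ∃ I ∈ P, ∃ J ∈ P, f = ind (I ×ˢ J)}

/-- `y` is the orthogonal projection of `x` onto the subspace `L`. -/
def IsProj (L : Submodule ℝ (Lp ℝ 2 (volume : Measure (ℝ × ℝ))))
    (x y : Lp ℝ 2 (volume : Measure (ℝ × ℝ))) : Prop :=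
  y ∈ L ∧ ∀ w ∈ L, ⟪x - y, w⟫ = 0

/-! ### Auxiliary lemmas -/

lemma FinUnionIntervals.measurableSet {S : Set ℝ} (h : FinUnionIntervals S) : MeasurableSet S := by
  obtain ⟨F, hF, rfl⟩ := h
  exact MeasurableSet.biUnion F.countable_toSet (fun I hI => (hF I hI).measurableSet)

lemma vol_ne_top_of_sub {S : Set ℝ} (h : S ⊆ Icc (0:ℝ) 1) : volume S ≠ ⊤ := by
  refine ne_top_of_le_ne_top ?_ (measure_mono h)
  simp [Real.volume_Icc]

lemma vol_prod (S T : Set ℝ) : volume (S ×ˢ T) = volume S * volume T := by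
  rw [Measure.volume_eq_prod, Measure.prod_prod]

lemma ind_eq {S : Set (ℝ×ℝ)} (h1 : MeasurableSet S) (h2 : volume S ≠ ⊤) :
    ind S = indicatorConstLp 2 h1 h2 (1:ℝ) := dif_pos ⟨h1, h2⟩

lemma inner_ind {S T : Set (ℝ×ℝ)} (hS : MeasurableSet S) (hS' : volume S ≠ ⊤)
    (hT : MeasurableSet T) (hT' : volume T ≠ ⊤) :
    ⟪ind S, ind T⟫ = (volume (S ∩ T)).toReal := by
  rw [ind_eq hS hS', ind_eq hT hT', L2.inner_indicatorConstLp_one hS hS',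
    setIntegral_indicatorConstLp hS hT hT' (1:ℝ)]
  simp [Set.inter_comm]
  rfl

lemma ind_union {S T : Set (ℝ×ℝ)} (hS : MeasurableSet S) (hS' : volume S ≠ ⊤)
    (hT : MeasurableSet T) (hT' : volume T ≠ ⊤) (hd : Disjoint S T) :
    ind (S ∪ T) = ind S + ind T := by
  rw [ind_eq hS hS', ind_eq hT hT', ind_eq (hS.union hT) (measure_union_ne_top hS' hT'),
    indicatorConstLp_disjoint_union hS hT hS' hT' hd (1:ℝ)]

lemma ind_empty : ind (∅ : Set (ℝ×ℝ)) = 0 := by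
  rw [ind_eq MeasurableSet.empty (by simp)]
  exact indicatorConstLp_empty

lemma ind_biUnion {ι : Type} [DecidableEq ι] (s : Finset ι) (f : ι → Set (ℝ×ℝ))
    (hm : ∀ i ∈ s, MeasurableSet (f i)) (hf : ∀ i ∈ s, volume (f i) ≠ ⊤)
    (hd : (↑s : Set ι).PairwiseDisjoint f) :
    ind (⋃ i ∈ s, f i) = ∑ i ∈ s, ind (f i) := by
  induction s using Finset.induction_on with
  | empty => simp [ind_empty]
  | insert a s ha ih =>
    rw [Finset.set_biUnion_insert, Finset.sum_insert ha,
      ← ih (fun i hi => hm i (Finset.mem_insert_of_mem hi))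
        (fun i hi => hf i (Finset.mem_insert_of_mem hi))
        (hd.subset (by simp [Set.subset_insert]))]
    refine ind_union (hm a (Finset.mem_insert_self a s)) (hf a (Finset.mem_insert_self a s))
      (MeasurableSet.biUnion s.countable_toSet (fun i hi => hm i (Finset.mem_insert_of_mem hi)))
      ?_ ?_
    · refine ne_top_of_le_ne_top ?_ (measure_biUnion_finset_le s f)
      exact (ENNReal.sum_lt_top.2 (fun i hi =>
        (hf i (Finset.mem_insert_of_mem hi)).lt_top)).ne
    · exact Set.disjoint_iUnion₂_right.2 (fun i hi =>
        hd (Finset.mem_insert_self a s) (Finset.mem_insert_of_mem hi)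
          (fun h => ha (h ▸ hi)))

lemma FinUnionIntervals.union {S T : Set ℝ} (hS : FinUnionIntervals S)
    (hT : FinUnionIntervals T) : FinUnionIntervals (S ∪ T) := by
  obtain ⟨F, hF, rfl⟩ := hS; obtain ⟨G, hG, rfl⟩ := hT
  refine ⟨F ∪ G, fun I hI => ?_, by rw [Finset.set_biUnion_union]⟩
  rcases Finset.mem_union.1 hI with h | h
  exacts [hF I h, hG I h]

lemma finUnionIntervals_biUnion (t : Finset (Set ℝ)) (h : ∀ I ∈ t, FinUnionIntervals I) :
    FinUnionIntervals (⋃ I ∈ t, I) := by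
  induction t using Finset.induction_on with
  | empty => exact ⟨∅, by simp, by simp⟩
  | insert a s ha ih =>
    rw [Finset.set_biUnion_insert]
    exact (h a (Finset.mem_insert_self a s)).union
      (ih (fun I hI => h I (Finset.mem_insert_of_mem hI)))

noncomputable def coef (A I : Set ℝ) : ℝ := (volume (A ∩ I)).toReal / (volume I).toReal

lemma coef_nonneg (A I : Set ℝ) : 0 ≤ coef A I :=
  div_nonneg ENNReal.toReal_nonneg ENNReal.toReal_nonneg

lemma coef_le_one (A I : Set ℝ) : coef A I ≤ 1 := by
  rw [coef]
  rcases eq_or_ne ((volume I).toReal) 0 with h | h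
  · simp [h]
  · rw [div_le_one (lt_of_le_of_ne (ENNReal.toReal_nonneg) (Ne.symm h))]
    rcases eq_or_ne (volume I) ⊤ with ht | ht
    · simp [ht] at h
    · exact ENNReal.toReal_mono ht (measure_mono Set.inter_subset_right)

lemma coef_mul (A I : Set ℝ) (hI : volume I ≠ ⊤) :
    coef A I * (volume I).toReal = (volume (A ∩ I)).toReal := by
  rcases eq_or_ne ((volume I).toReal) 0 with h | h
  · have h0 : volume I = 0 := by
      rwa [ENNReal.toReal_eq_zero_iff, or_iff_left hI] at h
    have h2 : volume (A ∩ I) = 0 := le_antisymm (h0 ▸ measure_mono Set.inter_subset_right)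
      (by simp)
    simp [coef, h, h2]
  · rw [coef, div_mul_cancel₀ _ h]

lemma vol_prod_ne_top {S T : Set ℝ} (hS : volume S ≠ ⊤) (hT : volume T ≠ ⊤) :
    volume (S ×ˢ T) ≠ ⊤ := by
  rw [vol_prod]; exact ENNReal.mul_ne_top hS hT

lemma inner_ind_prod {S T U V : Set ℝ} (hS : MeasurableSet S) (hS' : volume S ≠ ⊤)
    (hT : MeasurableSet T) (hT' : volume T ≠ ⊤)
    (hU : MeasurableSet U) (hU' : volume U ≠ ⊤)
    (hV : MeasurableSet V) (hV' : volume V ≠ ⊤) :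
    ⟪ind (S ×ˢ T), ind (U ×ˢ V)⟫ =
      (volume (S ∩ U)).toReal * (volume (T ∩ V)).toReal := by
  rw [inner_ind (hS.prod hT) (vol_prod_ne_top hS' hT') (hU.prod hV) (vol_prod_ne_top hU' hV'),
    Set.prod_inter_prod, vol_prod, ENNReal.toReal_mul]

lemma proj_N (A B : Set ℝ) (hA : MeasurableSet A) (hB : MeasurableSet B)
    (hA' : volume A ≠ ⊤) (hB' : volume B ≠ ⊤)
    (N : Finset (Set ℝ)) (hmeas : ∀ I ∈ N, MeasurableSet I)
    (hfin : ∀ I ∈ N, volume I ≠ ⊤)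
    (hdisj : (↑N : Set (Set ℝ)).PairwiseDisjoint id) :
    IsProj (LP N) (ind (A ×ˢ B))
      (∑ I ∈ N, ∑ J ∈ N, (coef A I * coef B J) • ind (I ×ˢ J)) := by
  set z := ∑ I ∈ N, ∑ J ∈ N, (coef A I * coef B J) • ind (I ×ˢ J) with hz
  constructor
  · refine Submodule.sum_mem _ (fun I hI => Submodule.sum_mem _ (fun J hJ => ?_))
    exact Submodule.smul_mem _ _ (Submodule.subset_span ⟨I, hI, J, hJ, rfl⟩)
  · intro w hw
    refine Submodule.span_induction ?_ (by simp) ?_ ?_ hw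
    · rintro f ⟨I', hI', J', hJ', rfl⟩
      rw [inner_sub_left]
      have hxw : ⟪ind (A ×ˢ B), ind (I' ×ˢ J')⟫ =
          (volume (A ∩ I')).toReal * (volume (B ∩ J')).toReal :=
        inner_ind_prod hA hA' hB hB' (hmeas I' hI') (hfin I' hI') (hmeas J' hJ') (hfin J' hJ')
      have hzw : ⟪z, ind (I' ×ˢ J')⟫ =
          (volume (A ∩ I')).toReal * (volume (B ∩ J')).toReal := by
        rw [hz, sum_inner]
        rw [Finset.sum_eq_single_of_mem I' hI' ?side1]
        · rw [sum_inner, Finset.sum_eq_single_of_mem J' hJ' ?side2]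
          · rw [real_inner_smul_left,
              inner_ind_prod (hmeas I' hI') (hfin I' hI') (hmeas J' hJ')
                (hfin J' hJ') (hmeas I' hI') (hfin I' hI') (hmeas J' hJ') (hfin J' hJ'),
              Set.inter_self, Set.inter_self]
            have h1 := coef_mul A I' (hfin I' hI')
            have h2 := coef_mul B J' (hfin J' hJ')
            rw [← h1, ← h2]; ring
          · intro J hJ hne
            rw [real_inner_smul_left,
              inner_ind_prod (hmeas I' hI') (hfin I' hI') (hmeas J hJ)
                (hfin J hJ) (hmeas I' hI') (hfin I' hI') (hmeas J' hJ') (hfin J' hJ')]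
            have : J ∩ J' = ∅ := Set.disjoint_iff_inter_eq_empty.1 (hdisj hJ hJ' hne)
            simp [this]
        · intro I hI hne
          rw [sum_inner]
          refine Finset.sum_eq_zero (fun J hJ => ?_)
          rw [real_inner_smul_left,
            inner_ind_prod (hmeas I hI) (hfin I hI) (hmeas J hJ)
              (hfin J hJ) (hmeas I' hI') (hfin I' hI') (hmeas J' hJ') (hfin J' hJ')]
          have : I ∩ I' = ∅ := Set.disjoint_iff_inter_eq_empty.1 (hdisj hI hI' hne)
          simp [this]
      rw [hxw, hzw, sub_self]
    · intro f g _ _ hf hg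
      rw [inner_add_right, hf, hg, add_zero]
    · intro c f _ hf
      rw [real_inner_smul_right, hf, mul_zero]

lemma isProj_unique {L : Submodule ℝ (Lp ℝ 2 (volume : Measure (ℝ × ℝ)))}
    {x y₁ y₂ : Lp ℝ 2 (volume : Measure (ℝ × ℝ))}
    (h1 : IsProj L x y₁) (h2 : IsProj L x y₂) : y₁ = y₂ := by
  have m : y₁ - y₂ ∈ L := Submodule.sub_mem _ h1.1 h2.1
  have a := h1.2 _ m
  have b := h2.2 _ m
  have key : ⟪y₁ - y₂, y₁ - y₂⟫ = 0 := by
    have e : x - y₂ - (x - y₁) = y₁ - y₂ := by abel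
    calc ⟪y₁ - y₂, y₁ - y₂⟫ = ⟪x - y₂, y₁ - y₂⟫ - ⟪x - y₁, y₁ - y₂⟫ := by
          rw [← inner_sub_left, e]
    _ = 0 := by rw [a, b, sub_zero]
  exact sub_eq_zero.1 (inner_self_eq_zero.1 key)

lemma norm_sq_sum_smul {ι : Type} (s : Finset ι) (c : ι → ℝ)
    (e : ι → Lp ℝ 2 (volume : Measure (ℝ × ℝ)))
    (horth : ∀ p ∈ s, ∀ q ∈ s, p ≠ q → ⟪e p, e q⟫ = 0) :
    ‖∑ p ∈ s, c p • e p‖^2 = ∑ p ∈ s, (c p)^2 * ⟪e p, e p⟫ := by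
  rw [← real_inner_self_eq_norm_sq, sum_inner]
  refine Finset.sum_congr rfl (fun p hp => ?_)
  rw [real_inner_smul_left, inner_sum,
    Finset.sum_eq_single_of_mem p hp (fun q hq hne => by
      rw [real_inner_smul_right, horth p hp q hq (Ne.symm hne), mul_zero]),
    real_inner_smul_right]
  ring

noncomputable def rnd (ε x : ℝ) : ℕ := ⌊x / (ε/2)⌋₊

lemma rnd_le (ε x : ℝ) (hε : 0 < ε) (hx : x ≤ 1) : rnd ε x ≤ ⌊2/ε⌋₊ := by
  refine Nat.floor_le_floor ?_
  rw [div_le_div_iff₀ (by linarith) hε]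
  nlinarith

lemma rnd_mul_le (ε x : ℝ) (hε : 0 < ε) (hx : 0 ≤ x) : (rnd ε x : ℝ) * (ε/2) ≤ x := by
  have hε2 : (0:ℝ) < ε/2 := by linarith
  have h := Nat.floor_le (show (0:ℝ) ≤ x / (ε/2) by positivity)
  rw [rnd]
  calc (⌊x/(ε/2)⌋₊:ℝ) * (ε/2) ≤ (x/(ε/2)) * (ε/2) := by nlinarith
  _ = x := by field_simp

lemma rnd_lt (ε x : ℝ) (hε : 0 < ε) : x - (rnd ε x : ℝ) * (ε/2) < ε/2 := by
  have hε2 : (0:ℝ) < ε/2 := by linarith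
  have h := Nat.lt_floor_add_one (x / (ε/2))
  rw [div_lt_iff₀ hε2] at h
  rw [rnd]; nlinarith

set_option maxHeartbeats 1000000 in
theorem stmt12 (ε : ℝ) (hε : 0 < ε) (A B : Set ℝ)
    (hA : FinUnionIntervals A) (hB : FinUnionIntervals B)
    (hA1 : A ⊆ Icc (0 : ℝ) 1) (hB1 : B ⊆ Icc (0 : ℝ) 1)
    (N : Finset (Set ℝ)) (hN : IsIntervalPartition N) :
    ∃ P : Finset (Set ℝ), IsIntervalPartition P ∧
      (∀ a ∈ N, ∃ b ∈ P, a ⊆ b) ∧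
      ((P.card : ℝ) ≤ (1 + 2 / ε) ^ 2) ∧
      ∀ xN xP, IsProj (LP N) (ind (A ×ˢ B)) xN → IsProj (LP P) (ind (A ×ˢ B)) xP →
        ‖xN - xP‖ < ε := by
  classical
  obtain ⟨hNfui, hNdisj, hNun⟩ := hN
  have hNmeas : ∀ I ∈ N, MeasurableSet I := fun I hI => (hNfui I hI).measurableSet
  have hNsub : ∀ I ∈ N, I ⊆ Icc (0:ℝ) 1 := by
    intro I hI x hx
    rw [← hNun]
    exact Set.mem_biUnion hI hx
  have hNfin : ∀ I ∈ N, volume I ≠ ⊤ := fun I hI => vol_ne_top_of_sub (hNsub I hI)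
  have hAm : MeasurableSet A := hA.measurableSet
  have hBm : MeasurableSet B := hB.measurableSet
  have hA' : volume A ≠ ⊤ := vol_ne_top_of_sub hA1
  have hB' : volume B ≠ ⊤ := vol_ne_top_of_sub hB1
  set r : Set ℝ → ℕ × ℕ := fun I => (rnd ε (coef A I), rnd ε (coef B I)) with hr
  set V : Finset (ℕ × ℕ) := N.image r with hV
  set SS : ℕ × ℕ → Set ℝ := fun v => ⋃ I ∈ N.filter (fun I => r I = v), I with hSS
  set P : Finset (Set ℝ) := V.image SS with hP
  have hmemP : ∀ v ∈ V, SS v ∈ P := fun v hv => Finset.mem_image_of_mem SS hv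
  have hsubSS : ∀ I ∈ N, I ⊆ SS (r I) := by
    intro I hI x hx
    simp only [hSS, Set.mem_iUnion]
    exact ⟨I, Finset.mem_filter.2 ⟨hI, rfl⟩, hx⟩
  have hclass : ∀ v, ∀ x ∈ SS v, ∃ I ∈ N, r I = v ∧ x ∈ I := by
    intro v x hx
    simp only [hSS, Set.mem_iUnion, Finset.mem_filter] at hx
    obtain ⟨I, ⟨hI, hrI⟩, hxI⟩ := hx
    exact ⟨I, hI, hrI, hxI⟩
  have hdisjSS : ∀ v w, v ≠ w → Disjoint (SS v) (SS w) := by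
    intro v w hvw
    rw [Set.disjoint_left]
    intro x hxv hxw
    obtain ⟨I, hI, hrI, hxI⟩ := hclass v x hxv
    obtain ⟨J, hJ, hrJ, hxJ⟩ := hclass w x hxw
    have hIJ : I ≠ J := by rintro rfl; exact hvw (hrI ▸ hrJ ▸ rfl)
    exact Set.disjoint_left.1 (hNdisj hI hJ hIJ) hxI hxJ
  refine ⟨P, ⟨?_, ?_, ?_⟩, ?_, ?_, ?_⟩
  · rintro S hS
    obtain ⟨v, hv, rfl⟩ := Finset.mem_image.1 hS
    exact finUnionIntervals_biUnion _ (fun I hI => hNfui I (Finset.mem_filter.1 hI).1)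
  · rintro s hs t ht hst
    obtain ⟨v, hv, rfl⟩ := Finset.mem_image.1 hs
    obtain ⟨w, hw, rfl⟩ := Finset.mem_image.1 ht
    have hvw : v ≠ w := by rintro rfl; exact hst rfl
    exact hdisjSS v w hvw
  · rw [← hNun]
    ext x
    simp only [Set.mem_iUnion]
    constructor
    · rintro ⟨S, hS, hxS⟩
      obtain ⟨v, hv, rfl⟩ := Finset.mem_image.1 hS
      obtain ⟨I, hI, _, hxI⟩ := hclass v x hxS
      exact ⟨I, hI, hxI⟩
    · rintro ⟨I, hI, hxI⟩
      exact ⟨SS (r I), hmemP _ (Finset.mem_image_of_mem r hI), hsubSS I hI hxI⟩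
  · intro a ha
    exact ⟨SS (r a), hmemP _ (Finset.mem_image_of_mem r ha), hsubSS a ha⟩
  · have h1 : P.card ≤ V.card := Finset.card_image_le
    have h2 : V ⊆ Finset.range (⌊2/ε⌋₊+1) ×ˢ Finset.range (⌊2/ε⌋₊+1) := by
      intro v hv
      obtain ⟨I, hI, rfl⟩ := Finset.mem_image.1 hv
      rw [Finset.mem_product, Finset.mem_range, Finset.mem_range]
      exact ⟨Nat.lt_succ_of_le (rnd_le ε _ hε (coef_le_one A I)),
        Nat.lt_succ_of_le (rnd_le ε _ hε (coef_le_one B I))⟩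
    have h3 : V.card ≤ (⌊2/ε⌋₊+1) * (⌊2/ε⌋₊+1) := by
      calc V.card ≤ _ := Finset.card_le_card h2
      _ = _ := by rw [Finset.card_product, Finset.card_range]
    have h4 : ((⌊2/ε⌋₊:ℝ)+1) ≤ 1 + 2/ε := by
      have := Nat.floor_le (by positivity : (0:ℝ) ≤ 2/ε)
      linarith
    calc (P.card : ℝ) ≤ ((⌊2/ε⌋₊+1) * (⌊2/ε⌋₊+1) : ℕ) := by
          exact_mod_cast h1.trans h3
    _ = ((⌊2/ε⌋₊:ℝ)+1)^2 := by push_cast; ring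
    _ ≤ (1+2/ε)^2 := pow_le_pow_left₀ (by positivity) h4 2
  · intro xN xP hxN hxP
    set aH : Set ℝ → ℝ := fun I => (rnd ε (coef A I) : ℝ) * (ε/2) with haH
    set bH : Set ℝ → ℝ := fun I => (rnd ε (coef B I) : ℝ) * (ε/2) with hbH
    set z := ∑ I ∈ N, ∑ J ∈ N, (coef A I * coef B J) • ind (I ×ˢ J) with hzdef
    have hzproj := proj_N A B hAm hBm hA' hB' N hNmeas hNfin hNdisj
    have hxNz : xN = z := isProj_unique hxN hzproj
    set y := ∑ v ∈ V, ∑ w ∈ V, (((v.1:ℝ)*(ε/2)) * ((w.2:ℝ)*(ε/2))) • ind (SS v ×ˢ SS w)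
      with hydef
    have hyP : y ∈ LP P := by
      rw [hydef]
      refine Submodule.sum_mem _ fun v hv => Submodule.sum_mem _ fun w hw =>
        Submodule.smul_mem _ _ ?_
      exact Submodule.subset_span ⟨SS v, hmemP v hv, SS w, hmemP w hw, rfl⟩
    have hsplit : ∀ v w, ind (SS v ×ˢ SS w) =
        ∑ I ∈ N.filter (fun I => r I = v), ∑ J ∈ N.filter (fun J => r J = w), ind (I ×ˢ J) := by
      intro v w
      have hset : SS v ×ˢ SS w = ⋃ p ∈ (N.filter (fun I => r I = v)) ×ˢ
          (N.filter (fun J => r J = w)), p.1 ×ˢ p.2 := by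
        ext q
        simp only [Set.mem_prod, hSS, Set.mem_iUnion, Finset.mem_product, Finset.mem_filter]
        constructor
        · rintro ⟨⟨I, hI, hxI⟩, ⟨J, hJ, hyJ⟩⟩
          exact ⟨(I, J), ⟨hI, hJ⟩, hxI, hyJ⟩
        · rintro ⟨⟨I, J⟩, ⟨hI, hJ⟩, hx, hy⟩
          exact ⟨⟨I, hI, hx⟩, ⟨J, hJ, hy⟩⟩
      rw [hset, ind_biUnion _ _ ?_ ?_ ?_, Finset.sum_product]
      · rintro ⟨I, J⟩ hp
        obtain ⟨hI, hJ⟩ := Finset.mem_product.1 hp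
        exact (hNmeas I (Finset.mem_filter.1 hI).1).prod (hNmeas J (Finset.mem_filter.1 hJ).1)
      · rintro ⟨I, J⟩ hp
        obtain ⟨hI, hJ⟩ := Finset.mem_product.1 hp
        exact vol_prod_ne_top (hNfin I (Finset.mem_filter.1 hI).1)
          (hNfin J (Finset.mem_filter.1 hJ).1)
      · rintro ⟨I, J⟩ hp ⟨I', J'⟩ hq hne
        simp only [Finset.coe_product, Set.mem_prod, Finset.mem_coe, Finset.mem_filter] at hp hq
        rcases eq_or_ne I I' with rfl | hII
        · have hJJ : J ≠ J' := by rintro rfl; exact hne rfl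
          exact Disjoint.set_prod_right (hNdisj hp.2.1 hq.2.1 hJJ) _ _
        · exact Disjoint.set_prod_left (hNdisj hp.1.1 hq.1.1 hII) _ _
    have hLPN : LP P ≤ LP N := by
      rw [LP, Submodule.span_le]
      rintro f ⟨s, hs, t, ht, rfl⟩
      obtain ⟨v, hv, rfl⟩ := Finset.mem_image.1 hs
      obtain ⟨w, hw, rfl⟩ := Finset.mem_image.1 ht
      rw [SetLike.mem_coe, hsplit v w]
      exact Submodule.sum_mem _ fun I hI => Submodule.sum_mem _ fun J hJ =>
        Submodule.subset_span ⟨I, (Finset.mem_filter.1 hI).1, J, (Finset.mem_filter.1 hJ).1, rfl⟩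
    have hyN : y = ∑ I ∈ N, ∑ J ∈ N, (aH I * bH J) • ind (I ×ˢ J) := by
      rw [hydef]
      have step1 : ∀ v ∈ V, ∀ w ∈ V,
          (((v.1:ℝ)*(ε/2)) * ((w.2:ℝ)*(ε/2))) • ind (SS v ×ˢ SS w)
          = ∑ I ∈ N.filter (fun I => r I = v), ∑ J ∈ N.filter (fun J => r J = w),
              (aH I * bH J) • ind (I ×ˢ J) := by
        intro v hv w hw
        rw [hsplit v w, Finset.smul_sum]
        refine Finset.sum_congr rfl (fun I hI => ?_)
        rw [Finset.smul_sum]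
        refine Finset.sum_congr rfl (fun J hJ => ?_)
        obtain ⟨hIN, hrI⟩ := Finset.mem_filter.1 hI
        obtain ⟨hJN, hrJ⟩ := Finset.mem_filter.1 hJ
        have e1 : aH I = (v.1:ℝ)*(ε/2) := by rw [haH, ← hrI]
        have e2 : bH J = (w.2:ℝ)*(ε/2) := by rw [hbH, ← hrJ]
        rw [e1, e2]
      calc ∑ v ∈ V, ∑ w ∈ V, (((v.1:ℝ)*(ε/2)) * ((w.2:ℝ)*(ε/2))) • ind (SS v ×ˢ SS w)
          = ∑ v ∈ V, ∑ w ∈ V, ∑ I ∈ N.filter (fun I => r I = v),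
              ∑ J ∈ N.filter (fun J => r J = w), (aH I * bH J) • ind (I ×ˢ J) :=
            Finset.sum_congr rfl fun v hv => Finset.sum_congr rfl fun w hw => step1 v hv w hw
      _ = ∑ v ∈ V, ∑ I ∈ N.filter (fun I => r I = v), ∑ w ∈ V,
              ∑ J ∈ N.filter (fun J => r J = w), (aH I * bH J) • ind (I ×ˢ J) :=
            Finset.sum_congr rfl fun v hv => Finset.sum_comm
      _ = ∑ v ∈ V, ∑ I ∈ N.filter (fun I => r I = v), ∑ J ∈ N,
              (aH I * bH J) • ind (I ×ˢ J) := by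
            refine Finset.sum_congr rfl fun v hv => Finset.sum_congr rfl fun I hI => ?_
            exact Finset.sum_fiberwise_of_maps_to (fun J hJ => Finset.mem_image_of_mem r hJ) _
      _ = ∑ I ∈ N, ∑ J ∈ N, (aH I * bH J) • ind (I ×ˢ J) :=
            Finset.sum_fiberwise_of_maps_to (fun I hI => Finset.mem_image_of_mem r hI) _
    have hzy : z - y = ∑ p ∈ N ×ˢ N,
        (coef A p.1 * coef B p.2 - aH p.1 * bH p.2) • ind (p.1 ×ˢ p.2) := by
      rw [hyN, hzdef, Finset.sum_product]
      rw [← Finset.sum_sub_distrib]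
      refine Finset.sum_congr rfl fun I hI => ?_
      rw [← Finset.sum_sub_distrib]
      refine Finset.sum_congr rfl fun J hJ => ?_
      rw [sub_smul]
    have hnormsq : ‖z - y‖^2 = ∑ p ∈ N ×ˢ N,
        (coef A p.1 * coef B p.2 - aH p.1 * bH p.2)^2 *
          ((volume p.1).toReal * (volume p.2).toReal) := by
      rw [hzy, norm_sq_sum_smul _ _ _ ?_]
      · refine Finset.sum_congr rfl fun p hp => ?_
        obtain ⟨h1, h2⟩ := Finset.mem_product.1 hp
        rw [inner_ind_prod (hNmeas _ h1) (hNfin _ h1) (hNmeas _ h2) (hNfin _ h2)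
          (hNmeas _ h1) (hNfin _ h1) (hNmeas _ h2) (hNfin _ h2), Set.inter_self, Set.inter_self]
      · rintro ⟨I, J⟩ hp ⟨I', J'⟩ hq hne
        obtain ⟨hI, hJ⟩ := Finset.mem_product.1 hp
        obtain ⟨hI', hJ'⟩ := Finset.mem_product.1 hq
        rw [inner_ind_prod (hNmeas _ hI) (hNfin _ hI) (hNmeas _ hJ) (hNfin _ hJ)
          (hNmeas _ hI') (hNfin _ hI') (hNmeas _ hJ') (hNfin _ hJ')]
        rcases eq_or_ne I I' with rfl | hII
        · have hJJ : J ≠ J' := by rintro rfl; exact hne rfl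
          have he : J ∩ J' = ∅ := Set.disjoint_iff_inter_eq_empty.1 (hNdisj hJ hJ' hJJ)
          simp [he]
        · have he : I ∩ I' = ∅ := Set.disjoint_iff_inter_eq_empty.1 (hNdisj hI hI' hII)
          simp [he]
    have hsum1 : ∑ I ∈ N, (volume I).toReal = 1 := by
      have h := measure_biUnion_finset (μ := volume) hNdisj hNmeas
      simp only [id_eq] at h
      rw [hNun] at h
      have h2 : ∑ I ∈ N, volume I = 1 := by
        rw [← h, Real.volume_Icc]; norm_num
      rw [← ENNReal.toReal_sum (fun I hI => hNfin I hI), h2, ENNReal.toReal_one]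
    have hNne : N.Nonempty := by
      by_contra h
      rw [Finset.not_nonempty_iff_eq_empty] at h
      have h0 : (0:ℝ) ∈ Icc (0:ℝ) 1 := ⟨le_refl 0, zero_le_one⟩
      rw [← hNun, h] at h0
      simp at h0
    set dA := N.sup' hNne (fun I => coef A I - aH I) with hdA
    set dB := N.sup' hNne (fun I => coef B I - bH I) with hdB
    have hA0 : ∀ I, 0 ≤ coef A I - aH I := fun I => by
      have := rnd_mul_le ε (coef A I) hε (coef_nonneg A I)
      rw [haH]; simp only; linarith
    have hB0 : ∀ I, 0 ≤ coef B I - bH I := fun I => by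
      have := rnd_mul_le ε (coef B I) hε (coef_nonneg B I)
      rw [hbH]; simp only; linarith
    have hdA0 : 0 ≤ dA := by
      obtain ⟨I0, hI0⟩ := hNne
      rw [hdA]
      exact le_trans (hA0 I0) (Finset.le_sup' (fun I => coef A I - aH I) hI0)
    have hdB0 : 0 ≤ dB := by
      obtain ⟨I0, hI0⟩ := hNne
      rw [hdB]
      exact le_trans (hB0 I0) (Finset.le_sup' (fun I => coef B I - bH I) hI0)
    have hdAlt : dA < ε/2 := (Finset.sup'_lt_iff hNne).2 (fun I hI => rnd_lt ε (coef A I) hε)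
    have hdBlt : dB < ε/2 := (Finset.sup'_lt_iff hNne).2 (fun I hI => rnd_lt ε (coef B I) hε)
    have hcbound : ∀ I ∈ N, ∀ J ∈ N,
        (coef A I * coef B J - aH I * bH J)^2 ≤ (dA + dB)^2 := by
      intro I hI J hJ
      have h1 : coef A I - aH I ≤ dA := by rw [hdA]; exact Finset.le_sup' (fun I => coef A I - aH I) hI
      have h2 : coef B J - bH J ≤ dB := by rw [hdB]; exact Finset.le_sup' (fun I => coef B I - bH I) hJ
      have h3 := hA0 I
      have h4 := hB0 J
      have h5 := coef_le_one A I
      have h6 := coef_le_one B J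
      have h7 := coef_nonneg A I
      have h8 := coef_nonneg B J
      have haH0 : 0 ≤ aH I := by
        rw [haH]; positivity
      have hbH0 : 0 ≤ bH J := by
        rw [hbH]; positivity
      have hc0 : 0 ≤ coef A I * coef B J - aH I * bH J := by nlinarith
      have hcle : coef A I * coef B J - aH I * bH J ≤ dA + dB := by nlinarith
      nlinarith
    have hbound : ‖z - y‖^2 ≤ (dA + dB)^2 := by
      rw [hnormsq]
      calc ∑ p ∈ N ×ˢ N, (coef A p.1 * coef B p.2 - aH p.1 * bH p.2)^2 *
              ((volume p.1).toReal * (volume p.2).toReal)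
          ≤ ∑ p ∈ N ×ˢ N, (dA + dB)^2 * ((volume p.1).toReal * (volume p.2).toReal) := by
            refine Finset.sum_le_sum fun p hp => ?_
            obtain ⟨h1, h2⟩ := Finset.mem_product.1 hp
            exact mul_le_mul_of_nonneg_right (hcbound _ h1 _ h2)
              (mul_nonneg ENNReal.toReal_nonneg ENNReal.toReal_nonneg)
      _ = (dA + dB)^2 * ∑ p ∈ N ×ˢ N, (volume p.1).toReal * (volume p.2).toReal := by
            rw [Finset.mul_sum]
      _ = (dA + dB)^2 * ((∑ I ∈ N, (volume I).toReal) * (∑ J ∈ N, (volume J).toReal)) := by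
            rw [Finset.sum_mul_sum, ← Finset.sum_product']
      _ = (dA + dB)^2 := by rw [hsum1]; ring
    have hperp : ∀ w ∈ LP P, ⟪xN - xP, w⟫ = 0 := by
      intro w hw
      have h1 := hxN.2 w (hLPN hw)
      have h2 := hxP.2 w hw
      have e : xN - xP = (ind (A ×ˢ B) - xP) - (ind (A ×ˢ B) - xN) := by abel
      rw [e, inner_sub_left, h1, h2, sub_zero]
    have hkey : ‖xN - xP‖^2 ≤ ‖xN - y‖^2 := by
      have e : xN - y = (xN - xP) + (xP - y) := by abel
      rw [e, norm_add_sq_real, hperp _ (Submodule.sub_mem _ hxP.1 hyP)]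
      nlinarith [sq_nonneg ‖xP - y‖]
    have hfin2 : ‖xN - xP‖^2 ≤ (dA + dB)^2 := by
      calc ‖xN - xP‖^2 ≤ ‖xN - y‖^2 := hkey
      _ = ‖z - y‖^2 := by rw [hxNz]
      _ ≤ _ := hbound
    have hn0 : 0 ≤ ‖xN - xP‖ := norm_nonneg _
    have hle : ‖xN - xP‖ ≤ dA + dB := by
      nlinarith [sq_nonneg (‖xN - xP‖ - (dA + dB)), sq_nonneg (‖xN - xP‖ + (dA + dB))]
    linarith
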